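/- arXiv:1801.03004 — 2 statements merged into one kernel-verified Lean document; each statement's English description precedes it below -/
import Mathlib

section
/- Let (A_N) be a sequence of complex numbers such that lim_{N→∞} |A_N|^{1/N} = 0 and there exist N₀ ∈ ℕ and C > 0 with |A_N| ≤ C · ∑_{k=N+1}^∞ |A_k| for all N ≥ N₀ (where the series converges). Then there exists N₁ ∈ ℕ such that A_N = 0 for all N ≥ N₁. -/
open Filter

/-- Tail-domination lemma: if `|A_N|^{1/N} → 0` and each term is dominated by a
constant times the tail of the series of absolute values, then the sequence is
eventually zero. -/
theorem stmt_0 (A : ℕ → ℂ)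
    (hroot : Tendsto (fun N : ℕ => ‖A N‖ ^ (1 / (N : ℝ))) atTop (nhds 0))
    (hsum : Summable (fun k : ℕ => ‖A k‖))
    (N₀ : ℕ) (C : ℝ) (hC : 0 < C)
    (htail : ∀ N ≥ N₀, ‖A N‖ ≤ C * ∑' k : ℕ, ‖A (N + 1 + k)‖) :
    ∃ N₁ : ℕ, ∀ N ≥ N₁, A N = 0 := by
  set T : ℕ → ℝ := fun N => ∑' k : ℕ, ‖A (N + 1 + k)‖ with hTdef
  have hsummable : ∀ N : ℕ, Summable (fun k : ℕ => ‖A (N + 1 + k)‖) := by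
    intro N
    exact ((summable_nat_add_iff (N + 1)).2 hsum).congr (fun n => by rw [add_comm])
  have hTnonneg : ∀ N, 0 ≤ T N := fun N => tsum_nonneg fun k => (norm_nonneg _)
  have hrec : ∀ N, T N = ‖A (N + 1)‖ + T (N + 1) := by
    intro N
    have h := Summable.tsum_eq_zero_add (hsummable N)
    rw [hTdef]
    simp only []
    rw [h]
    congr 1
    exact tsum_congr fun k => by rw [show N + 1 + (k + 1) = N + 1 + 1 + k from by omega]
  -- choose ε
  set ε : ℝ := 1 / (2 * (1 + C)) with hεdef
  have hεpos : 0 < ε := by positivity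
  have hεlt1 : ε < 1 := by
    rw [hεdef, div_lt_one (by positivity)]; linarith
  have hhalf : (1 + C) * ε = 1 / 2 := by
    rw [hεdef]; field_simp
  -- eventual bound from root condition
  have hev : ∀ᶠ N in atTop, ‖A N‖ ^ (1 / (N : ℝ)) < ε :=
    hroot.eventually (gt_mem_nhds hεpos)
  obtain ⟨M, hM⟩ := eventually_atTop.1 hev
  set M' : ℕ := max M 1 with hM'def
  have habs : ∀ N ≥ M', ‖A N‖ ≤ ε ^ N := by
    intro N hN
    have h1 : ‖A N‖ ^ (1 / (N : ℝ)) < ε := hM N (le_trans (le_max_left _ _) hN)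
    have hN1 : 1 ≤ N := le_trans (le_max_right _ _) hN
    have hNne : (N : ℝ) ≠ 0 := Nat.cast_ne_zero.2 (by omega)
    have key : ‖A N‖ = (‖A N‖ ^ (1 / (N : ℝ))) ^ N := by
      rw [← Real.rpow_natCast (‖A N‖ ^ (1 / (N : ℝ))) N,
        ← Real.rpow_mul (norm_nonneg _), one_div_mul_cancel hNne, Real.rpow_one]
    rw [key]
    exact pow_le_pow_left₀ (Real.rpow_nonneg (norm_nonneg _) _) h1.le N
  -- tail bound
  have htb : ∀ N ≥ M', T N ≤ ε ^ (N + 1) * (1 - ε)⁻¹ := by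
    intro N hN
    have hgeom : Summable (fun k : ℕ => ε ^ (N + 1 + k)) := by
      have : Summable (fun k : ℕ => ε ^ (N + 1) * ε ^ k) :=
        (summable_geometric_of_lt_one hεpos.le hεlt1).mul_left _
      exact this.congr fun k => by rw [← pow_add]
    have h1 : T N ≤ ∑' k : ℕ, ε ^ (N + 1 + k) := by
      apply Summable.tsum_le_tsum _ (hsummable N) hgeom
      intro k
      exact habs (N + 1 + k) (by omega)
    have h2 : ∑' k : ℕ, ε ^ (N + 1 + k) = ε ^ (N + 1) * (1 - ε)⁻¹ := by
      have : ∑' k : ℕ, ε ^ (N + 1 + k) = ∑' k : ℕ, ε ^ (N + 1) * ε ^ k :=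
        tsum_congr fun k => by rw [pow_add]
      rw [this, tsum_mul_left, tsum_geometric_of_lt_one hεpos.le hεlt1]
    linarith [h1, h2.le]
  -- induction: T N₀ ≤ (1+C)^m * T (N₀ + m)
  have hind : ∀ m : ℕ, T N₀ ≤ (1 + C) ^ m * T (N₀ + m) := by
    intro m
    induction m with
    | zero => simp
    | succ m ih =>
      have hstep : T (N₀ + m) ≤ (1 + C) * T (N₀ + m + 1) := by
        have h := hrec (N₀ + m)
        have ht : ‖A (N₀ + m + 1)‖ ≤ C * T (N₀ + m + 1) :=
          htail (N₀ + m + 1) (by omega)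
        rw [h]; nlinarith [hTnonneg (N₀ + m + 1)]
      calc T N₀ ≤ (1 + C) ^ m * T (N₀ + m) := ih
        _ ≤ (1 + C) ^ m * ((1 + C) * T (N₀ + m + 1)) :=
            mul_le_mul_of_nonneg_left hstep (by positivity)
        _ = (1 + C) ^ (m + 1) * T (N₀ + (m + 1)) := by
            rw [show N₀ + (m + 1) = N₀ + m + 1 from rfl]; ring
  -- T N₀ ≤ 0
  have hlim : Tendsto (fun m : ℕ => ((1 + C) * ε) ^ m * (ε ^ (N₀ + 1) * (1 - ε)⁻¹))
      atTop (nhds 0) := by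
    have h0 : Tendsto (fun m : ℕ => ((1 + C) * ε) ^ m) atTop (nhds 0) := by
      apply tendsto_pow_atTop_nhds_zero_of_lt_one (by positivity)
      rw [hhalf]; norm_num
    simpa using h0.mul_const _
  have hTle : T N₀ ≤ 0 := by
    apply ge_of_tendsto hlim
    filter_upwards [eventually_ge_atTop M'] with m hm
    calc T N₀ ≤ (1 + C) ^ m * T (N₀ + m) := hind m
      _ ≤ (1 + C) ^ m * (ε ^ (N₀ + m + 1) * (1 - ε)⁻¹) :=
          mul_le_mul_of_nonneg_left (htb (N₀ + m) (by omega)) (by positivity)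
      _ = ((1 + C) * ε) ^ m * (ε ^ (N₀ + 1) * (1 - ε)⁻¹) := by
          rw [show N₀ + m + 1 = (N₀ + 1) + m from by omega, pow_add, mul_pow]; ring
  have hT0 : T N₀ = 0 := le_antisymm hTle (hTnonneg N₀)
  refine ⟨N₀, fun N hN => ?_⟩
  have habs0 : ‖A N‖ = 0 := by
    rcases eq_or_lt_of_le hN with h | h
    · have h1 : ‖A N₀‖ ≤ C * T N₀ := htail N₀ le_rfl
      rw [hT0, mul_zero] at h1
      rw [← h]
      exact le_antisymm h1 (norm_nonneg _)
    · have hle : ‖A (N₀ + 1 + (N - N₀ - 1))‖ ≤ T N₀ :=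
        Summable.le_tsum (hsummable N₀) (N - N₀ - 1) fun j _ => norm_nonneg _
      rw [show N₀ + 1 + (N - N₀ - 1) = N from by omega] at hle
      have := norm_nonneg (A N)
      linarith [hT0 ▸ hle]
  exact norm_eq_zero.1 habs0
end

section
/- Let (q_n) be a sequence of polynomials of degree at most M, each normalized so that the sum of the absolute values of its coefficients equals 1: q_n(z) = ∑_{k=0}^M λ_{n,k} z^k with ∑_{k=0}^M |λ_{n,k}| = 1. Let Q be a monic polynomial of degree M and let λ_{n,M} be the leading coefficient of q_n. If limsup_{n→∞} ‖q_n − λ_{n,M} Q‖^{1/n} ≤ θ < 1, then liminf_{n→∞} |λ_{n,M}| > 0. -/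
open Filter Polynomial

/-- If the polynomials `q_n`, normalized so that the sum of absolute values of
their coefficients equals `1`, satisfy
`limsup ‖q_n - λ_{n,M} Q‖^{1/n} ≤ θ < 1` for a monic polynomial `Q` of degree `M`,
then the leading coefficients `λ_{n,M}` stay bounded away from `0`. -/
theorem stmt_5 (M : ℕ) (q : ℕ → Polynomial ℂ)
    (hdeg : ∀ n, (q n).degree ≤ (M : WithBot ℕ))
    (hnorm : ∀ n, ∑ k ∈ Finset.range (M + 1), ‖(q n).coeff k‖ = 1)
    (Q : Polynomial ℂ) (hQmonic : Q.Monic) (hQdeg : Q.natDegree = M)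
    (θ : ℝ) (hθ : θ < 1)
    (hlim : limsup (fun n : ℕ =>
        (∑ k ∈ Finset.range (M + 1),
          ‖(q n - C ((q n).coeff M) * Q).coeff k‖) ^ (1 / (n : ℝ))) atTop ≤ θ) :
    0 < liminf (fun n : ℕ => ‖(q n).coeff M‖) atTop := by
  set a : ℕ → ℝ := fun n => ∑ k ∈ Finset.range (M + 1),
      ‖(q n - C ((q n).coeff M) * Q).coeff k‖ with ha
  set NQ : ℝ := ∑ k ∈ Finset.range (M + 1), ‖Q.coeff k‖ with hNQ
  have hMmem : M ∈ Finset.range (M + 1) := Finset.self_mem_range_succ M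
  have hQM : ‖Q.coeff M‖ = 1 := by
    rw [← hQdeg, hQmonic.coeff_natDegree, norm_one]
  have hNQ1 : (1 : ℝ) ≤ NQ := by
    rw [← hQM]
    exact Finset.single_le_sum (fun k _ => norm_nonneg _) hMmem
  have hNQ0 : (0 : ℝ) < NQ := lt_of_lt_of_le one_pos hNQ1
  have ha0 : ∀ n, 0 ≤ a n := fun n =>
    Finset.sum_nonneg fun k _ => norm_nonneg _
  -- key triangle inequality: 1 ≤ a n + |λ_n| * NQ
  have hkey : ∀ n, (1 : ℝ) ≤ a n + ‖(q n).coeff M‖ * NQ := by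
    intro n
    rw [← hnorm n, ha, Finset.mul_sum, ← Finset.sum_add_distrib]
    refine Finset.sum_le_sum fun k _ => ?_
    have hc : (q n).coeff k = ((q n - C ((q n).coeff M) * Q).coeff k)
        + ((q n).coeff M) * Q.coeff k := by
      simp [Polynomial.coeff_sub, Polynomial.coeff_C_mul]
    calc ‖(q n).coeff k‖
        ≤ ‖(q n - C ((q n).coeff M) * Q).coeff k‖
          + ‖((q n).coeff M) * Q.coeff k‖ := by
          rw [hc]; exact norm_add_le _ _
      _ = _ := by rw [norm_mul]
  have hlam_le : ∀ n, ‖(q n).coeff M‖ ≤ 1 := by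
    intro n
    rw [← hnorm n]
    exact Finset.single_le_sum (fun k _ => norm_nonneg _) hMmem
  -- bound a n ≤ 1 + NQ, hence the rpow sequence is bounded above
  have haBound : ∀ n, a n ≤ 1 + NQ := by
    intro n
    rw [ha]
    calc ∑ k ∈ Finset.range (M + 1), ‖(q n - C ((q n).coeff M) * Q).coeff k‖
        ≤ ∑ k ∈ Finset.range (M + 1),
            (‖(q n).coeff k‖ + ‖(q n).coeff M‖ * ‖Q.coeff k‖) := by
          refine Finset.sum_le_sum fun k _ => ?_
          calc ‖(q n - C ((q n).coeff M) * Q).coeff k‖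
              ≤ ‖(q n).coeff k‖ + ‖(C ((q n).coeff M) * Q).coeff k‖ := by
                rw [Polynomial.coeff_sub]; exact norm_sub_le _ _
            _ = _ := by rw [Polynomial.coeff_C_mul, norm_mul]
      _ = 1 + ‖(q n).coeff M‖ * NQ := by
          rw [Finset.sum_add_distrib, hnorm n, hNQ, Finset.mul_sum]
      _ ≤ 1 + NQ := by
          have : ‖(q n).coeff M‖ * NQ ≤ NQ :=
            mul_le_of_le_one_left hNQ0.le (hlam_le n)
          linarith
  set r : ℝ := (max θ 0 + 1) / 2 with hr
  have hr0 : 0 < r := by positivity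
  have hr1 : r < 1 := by
    rw [hr]
    have : max θ 0 < 1 := max_lt hθ one_pos
    linarith
  have hbdd : IsBoundedUnder (· ≤ ·) atTop
      (fun n : ℕ => a n ^ (1 / (n : ℝ))) := by
    refine isBoundedUnder_of ⟨max (1 + NQ) 1, fun (n : ℕ) => ?_⟩
    rcases Nat.eq_zero_or_pos n with hn | hn
    · simp [hn, le_max_right]
    · rcases le_or_gt (a n) 1 with h1 | h1
      · have : a n ^ (1 / (n : ℝ)) ≤ 1 := by
          exact Real.rpow_le_one (ha0 n) h1 (by positivity)
        exact le_trans this (le_max_right _ _)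
      · have h1n : (1 : ℝ) / (n : ℝ) ≤ 1 := by
          rw [div_le_one (by exact_mod_cast hn)]
          exact_mod_cast hn
        have : a n ^ (1 / (n : ℝ)) ≤ a n ^ (1 : ℝ) :=
          Real.rpow_le_rpow_of_exponent_le h1.le h1n
        rw [Real.rpow_one] at this
        exact le_trans (this.trans (haBound n)) (le_max_left _ _)
  have hlt : ∀ᶠ n in atTop, a n ^ (1 / (n : ℝ)) < r := by
    refine eventually_lt_of_limsup_lt (lt_of_le_of_lt hlim ?_) hbdd
    rw [hr]
    have := le_max_left θ 0
    linarith [max_lt hθ one_pos]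
  -- a n < r ^ n eventually, hence a n → 0
  have haSmall : ∀ᶠ n in atTop, a n < r ^ n := by
    filter_upwards [hlt, eventually_ge_atTop 1] with n hn hn1
    have hne : n ≠ 0 := Nat.one_le_iff_ne_zero.mp hn1
    have := pow_lt_pow_left₀ hn (Real.rpow_nonneg (ha0 n) _) hne
    rwa [one_div, Real.rpow_inv_natCast_pow (ha0 n) hne] at this
  have haTendsto : Tendsto a atTop (nhds 0) := by
    refine squeeze_zero' (Eventually.of_forall ha0) (haSmall.mono fun n h => h.le) ?_
    exact tendsto_pow_atTop_nhds_zero_of_lt_one hr0.le hr1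
  have haHalf : ∀ᶠ n in atTop, a n ≤ 1 / 2 := by
    have := haTendsto.eventually (gt_mem_nhds (show (0:ℝ) < 1/2 by norm_num))
    exact this.mono fun n h => h.le
  have hlow : ∀ᶠ n in atTop, 1 / (2 * NQ) ≤ ‖(q n).coeff M‖ := by
    filter_upwards [haHalf] with n hn
    have h1 := hkey n
    have h2 : 1 / 2 ≤ ‖(q n).coeff M‖ * NQ := by linarith
    calc 1 / (2 * NQ) = (1 / 2) / NQ := by ring
      _ ≤ _ := (div_le_iff₀ hNQ0).mpr h2
  have hcob : IsCoboundedUnder (· ≥ ·) atTop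
      (fun n : ℕ => ‖(q n).coeff M‖) :=
    IsBoundedUnder.isCoboundedUnder_ge (isBoundedUnder_of ⟨1, hlam_le⟩)
  calc (0 : ℝ) < 1 / (2 * NQ) := by
        apply one_div_pos.mpr; linarith
    _ ≤ _ := le_liminf_of_le hcob hlow
end
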